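/- Under the conditions I₁₃ = 0, I₂₃² = I₂₂(I₁₁ − I₂₂), b₁ = 0, and I₂₂b₂ + I₂₃b₃ = 0, the function F₂ = I₁₁γ₁ω₁ + (I₂₂γ₂ + I₂₃γ₃)ω₂ is a first integral of the Suslov system with gravity: its time derivative along solutions vanishes identically. -/

import Mathlib

/-- Under the Hess-type conditions, `F₂ = I₁₁γ₁ω₁ + (I₂₂γ₂ + I₂₃γ₃)ω₂` is a first
integral of the Suslov system with gravity. -/
theorem suslov_hess_area_integral
    (I11 I22 I13 I23 b1 b2 b3 : ℝ) (hI11 : 0 < I11) (hI22 : 0 < I22)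
    (hc1 : I13 = 0) (hc2 : I23 ^ 2 = I22 * (I11 - I22))
    (hc3 : b1 = 0) (hc4 : I22 * b2 + I23 * b3 = 0)
    (ω1 ω2 γ1 γ2 γ3 : ℝ → ℝ)
    (h1 : ∀ t, HasDerivAt ω1
      ((-ω2 t * (I13 * ω1 t + I23 * ω2 t) + b3 * γ2 t - b2 * γ3 t) / I11) t)
    (h2 : ∀ t, HasDerivAt ω2
      ((ω1 t * (I13 * ω1 t + I23 * ω2 t) + b1 * γ3 t - b3 * γ1 t) / I22) t)
    (h3 : ∀ t, HasDerivAt γ1 (-(γ3 t) * ω2 t) t)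
    (h4 : ∀ t, HasDerivAt γ2 (γ3 t * ω1 t) t)
    (h5 : ∀ t, HasDerivAt γ3 (γ1 t * ω2 t - γ2 t * ω1 t) t) :
    ∀ t, HasDerivAt
      (fun s => I11 * γ1 s * ω1 s + (I22 * γ2 s + I23 * γ3 s) * ω2 s) 0 t := by
  intro t
  have hD := (((h3 t).const_mul I11).mul (h1 t)).add
    ((((h4 t).const_mul I22).add ((h5 t).const_mul I23)).mul (h2 t))
  have e : (I11 * (-(γ3 t) * ω2 t) * ω1 t +
      (I11 * γ1 t) * ((-ω2 t * (I13 * ω1 t + I23 * ω2 t) + b3 * γ2 t - b2 * γ3 t) / I11)) +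
      ((I22 * (γ3 t * ω1 t) + I23 * (γ1 t * ω2 t - γ2 t * ω1 t)) * ω2 t +
      (I22 * γ2 t + I23 * γ3 t) *
        ((ω1 t * (I13 * ω1 t + I23 * ω2 t) + b1 * γ3 t - b3 * γ1 t) / I22)) = 0 := by
    subst hc1; subst hc3
    field_simp
    linear_combination (γ3 t * ω1 t * ω2 t) * hc2 - (γ1 t * γ3 t) * hc4
  have := hD
  simp only [Pi.add_apply] at this
  rw [e] at this
  exact this
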